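/- Let X ⊂ Y be normed spaces with continuous embedding, a ≥ 0, m ∈ ℕ* and θ > 0. Then S_{θ,m,a}(X,Y) = K_{γ,b}(X,Y) with γ = θ/(2m+θ) and b = 2ma/(2m+θ); moreover there is a universal, explicitly computable constant C such that for every y ∈ Y: (1/C) ρ^{X,Y}_{θ,m,a}(y) ≤ |y|_{γ,b} ≤ C (‖y‖_Y + ρ^{X,Y}_{θ,m,a}(y)). -/

import Mathlib

open MeasureTheory ENNReal Filter

noncomputable section

/-- Euclidean space `ℝ^d`. -/
abbrev Vec (d : ℕ) := EuclideanSpace ℝ (Fin d)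

variable {d : ℕ}

/-- The class `𝓔` of Young functions: symmetric, strictly convex, nonnegative, vanishing at `0`,
satisfying the `Δ₂` (doubling) condition, and with `s ↦ e s / s` nondecreasing. -/
structure IsYoungE (e : ℝ → ℝ) : Prop where
  symm : ∀ s, e (-s) = e s
  nonneg : ∀ s, 0 ≤ e s
  zero : e 0 = 0
  strictConvexOn : StrictConvexOn ℝ Set.univ e
  delta2 : ∃ lam > 0, ∀ s, e (2 * s) ≤ lam * e s
  ratio_mono : ∀ s t : ℝ, 0 < s → s ≤ t → e s / s ≤ e t / t

/-- Luxemburg norm `‖f‖_(e) = inf {c > 0 : ∫ e (f x / c) dx ≤ 1}` (with value `∞` if no such `c`). -/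
def luxNorm (e : ℝ → ℝ) (f : Vec d → ℝ) : ℝ≥0∞ :=
  sInf {c : ℝ≥0∞ | 0 < c ∧ c ≠ ∞ ∧ ∫ x, e (f x / c.toReal) ≤ 1}

/-- `e⁻¹ a = sup {c : e c ≤ a}`. -/
def einv (e : ℝ → ℝ) (a : ℝ) : ℝ := sSup {c : ℝ | e c ≤ a}

/-- `β_e R = R / e⁻¹ R`. -/
def betaE (e : ℝ → ℝ) (R : ℝ) : ℝ := R / einv e R

/-- Conjugate (Legendre transform) Young function `e_*`. -/
def econj (e : ℝ → ℝ) (s : ℝ) : ℝ := sSup {r : ℝ | ∃ t : ℝ, r = s * t - e t}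

/-- Partial derivative in the `i`-th coordinate direction. -/
def pd (i : Fin d) (f : Vec d → ℝ) : Vec d → ℝ :=
  fun x => fderiv ℝ f x (EuclideanSpace.single i 1)

/-- Multi-index partial derivative `∂_α`. -/
def mderiv (α : Fin d → ℕ) (f : Vec d → ℝ) : Vec d → ℝ :=
  (List.finRange d).foldl (fun g i => (pd i)^[α i] g) f

/-- Length `|α|` of a multi-index. -/
def mOrder (α : Fin d → ℕ) : ℕ := ∑ i, α i

/-- `‖φ‖_{k,∞} = Σ_{|α| ≤ k} ‖∂_α φ‖_∞` (as an extended real). -/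
def supNorm (k : ℕ) (φ : Vec d → ℝ) : ℝ≥0∞ :=
  ∑' α : {α : Fin d → ℕ // mOrder α ≤ k}, ⨆ x : Vec d, ENNReal.ofReal |mderiv α.1 φ x|

/-- Weighted Orlicz–Sobolev norm `‖f‖_{k,l,(e)} = Σ_{|γ|≤l} Σ_{|α|≤k} ‖x^γ ∂_α f‖_(e)`. -/
def wnorm (e : ℝ → ℝ) (k l : ℕ) (f : Vec d → ℝ) : ℝ≥0∞ :=
  ∑' γ : {γ : Fin d → ℕ // mOrder γ ≤ l}, ∑' α : {α : Fin d → ℕ // mOrder α ≤ k},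
    luxNorm e (fun x => (∏ i, x i ^ γ.1 i) * mderiv α.1 f x)

/-- Integral of `φ` against a finite signed measure, via the Jordan decomposition. -/
def sInt (μ : SignedMeasure (Vec d)) (φ : Vec d → ℝ) : ℝ :=
  ∫ x, φ x ∂μ.toJordanDecomposition.posPart - ∫ x, φ x ∂μ.toJordanDecomposition.negPart

/-- The distance `d_k(μ,ν) = sup {|∫φdμ − ∫φdν| : φ ∈ C^∞, ‖φ‖_{k,∞} ≤ 1}`. -/
def dk (k : ℕ) (μ ν : SignedMeasure (Vec d)) : ℝ :=
  sSup {r : ℝ | ∃ φ : Vec d → ℝ, ContDiff ℝ (⊤ : ℕ∞) φ ∧ supNorm k φ ≤ 1 ∧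
    r = |sInt μ φ - sInt ν φ|}

/-- `μ ∈ 𝓜_a` with density `p` (absolute continuity w.r.t. Lebesgue measure). -/
def HasDensity (μ : SignedMeasure (Vec d)) (p : Vec d → ℝ) : Prop :=
  Integrable p volume ∧ ∀ s : Set (Vec d), MeasurableSet s → μ s = ∫ x in s, p x

/-- `π_{q,k,m,e}(μ,(μ_n)_n)` where `p n` is the density of `ν n`. -/
def piApprox (e : ℝ → ℝ) (q k m : ℕ) (μ : SignedMeasure (Vec d))
    (ν : ℕ → SignedMeasure (Vec d)) (p : ℕ → Vec d → ℝ) : ℝ≥0∞ :=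
  (∑' n : ℕ, (2 : ℝ≥0∞) ^ (n * (q + k)) * ENNReal.ofReal (betaE e ((2:ℝ) ^ (n * d))) *
      ENNReal.ofReal (dk k μ (ν n)))
  + ∑' n : ℕ, ((2 : ℝ≥0∞) ^ (2 * n * m))⁻¹ * wnorm e (2 * m + q) (2 * m) (p n)

/-- `ρ_{q,k,m,e}(μ)`: infimum of `π_{q,k,m,e}(μ,(μ_n)_n)` over sequences of absolutely
continuous measures. -/
def rho (e : ℝ → ℝ) (q k m : ℕ) (μ : SignedMeasure (Vec d)) : ℝ≥0∞ :=
  ⨅ (ν : ℕ → SignedMeasure (Vec d)) (p : ℕ → Vec d → ℝ) (_ : ∀ n, HasDensity (ν n) (p n)),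
    piApprox e q k m μ ν p

/-- `g` is the `α`-th distributional (weak) derivative of `f`. -/
def HasWeakDeriv (α : Fin d → ℕ) (f g : Vec d → ℝ) : Prop :=
  ∀ φ : Vec d → ℝ, ContDiff ℝ (⊤ : ℕ∞) φ → HasCompactSupport φ →
    ∫ x, mderiv α φ x * f x = (-1 : ℝ) ^ mOrder α * ∫ x, φ x * g x

/-- `L_a(R) = R (ln R)^a`. -/
def La (a R : ℝ) : ℝ := R * Real.log R ^ a

/-- The set `M_{m,q,e}(R)` of absolutely continuous measures with `‖p_μ‖_{2m+q,2m,(e)} ≤ R`. -/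
def Mset (e : ℝ → ℝ) (m q : ℕ) (R : ℝ) : Set (SignedMeasure (Vec d)) :=
  {ν | ∃ p : Vec d → ℝ, HasDensity ν p ∧ wnorm e (2 * m + q) (2 * m) p ≤ ENNReal.ofReal R}

/-- `d_k(μ, A) = inf_{ν ∈ A} d_k(μ,ν)`. -/
def dkSet (k : ℕ) (μ : SignedMeasure (Vec d)) (A : Set (SignedMeasure (Vec d))) : ℝ :=
  sInf {r : ℝ | ∃ ν ∈ A, r = dk k μ ν}

/-- Hypothesis `H_q(k,m,e)` for `μ`. -/
def Hq (e : ℝ → ℝ) (q k m : ℕ) (μ : SignedMeasure (Vec d)) : Prop :=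
  ∃ a : ℝ, 1 < a ∧ ∃ Cb : ℝ, ∀ᶠ R in atTop,
    La a R ^ (1 + ((k : ℝ) + q) / (2 * m)) * betaE e (La a R ^ ((d : ℝ) / (2 * m))) / R *
      dkSet k μ (Mset e m q R) ≤ Cb

/-- `e ∈ 𝓔_{a,c}` : `0 < liminf β_e(R)/(R^a (ln R)^c) ≤ limsup β_e(R)/(R^a (ln R)^c) < ∞`. -/
def MemEclass (e : ℝ → ℝ) (a c : ℝ) : Prop :=
  ∃ c₁ c₂ : ℝ, 0 < c₁ ∧ ∀ᶠ R in atTop,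
    c₁ * (R ^ a * Real.log R ^ c) ≤ betaE e R ∧ betaE e R ≤ c₂ * (R ^ a * Real.log R ^ c)

/-- Weak derivative with respect to a (positive) measure `μ`:
`∫ ∂_α f · g dμ = (−1)^{|α|} ∫ f · h dμ` for test functions `f`. -/
def WeakDerivMu (μ : Measure (Vec d)) (α : Fin d → ℕ) (g h : Vec d → ℝ) : Prop :=
  ∀ f : Vec d → ℝ, ContDiff ℝ (⊤ : ℕ∞) f → HasCompactSupport f →
    ∫ x, mderiv α f x * g x ∂μ = (-1 : ℝ) ^ mOrder α * ∫ x, f x * h x ∂μ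

/-- The Sobolev norm `‖1‖_{W^{m,p}_μ}` (infimum over admissible families of weak derivatives;
`∞` if `1 ∉ W^{m,p}_μ`). -/
def muSobNorm (μ : Measure (Vec d)) (m : ℕ) (p : ℝ≥0∞) : ℝ≥0∞ :=
  ⨅ (h : (Fin d → ℕ) → Vec d → ℝ)
    (_ : ∀ α : Fin d → ℕ, 1 ≤ mOrder α → mOrder α ≤ m →
      WeakDerivMu μ α (fun _ => 1) (h α)),
    (eLpNorm (fun _ : Vec d => (1 : ℝ)) p μ +
      ∑' α : {α : Fin d → ℕ // 1 ≤ mOrder α ∧ mOrder α ≤ m}, eLpNorm (h α.1) p μ)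

/-- `c_{m,p}(μ) = ‖1‖_{W^{1,p}_μ}^{k_{d,p}} ‖1‖_{W^{m,p}_μ}` with `k_{d,p} = (d−1)/(1−d/p)`. -/
def cMP (μ : Measure (Vec d)) (m : ℕ) (p : ℝ) : ℝ≥0∞ :=
  muSobNorm μ 1 (ENNReal.ofReal p) ^ (((d : ℝ) - 1) / (1 - d / p)) *
    muSobNorm μ m (ENNReal.ofReal p)

/-- Moment `m_k(μ) = ∫ (1+|x|)^k dμ`. -/
def mMoment (k : ℕ) (μ : Measure (Vec d)) : ℝ≥0∞ :=
  ∫⁻ x, ENNReal.ofReal ((1 + ‖x‖) ^ k) ∂μ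

/-- The set `M̃_{m,q,e}(R)`. -/
def MsetT (d' m q : ℕ) (R : ℝ) : Set (SignedMeasure (Vec d')) :=
  {ν | ∃ (κ : Measure (Vec d')) (_ : IsFiniteMeasure κ), ν = κ.toSignedMeasure ∧
    (∃ p, HasDensity ν p) ∧
    cMP κ (2 * m + q) (2 * (d' + 1)) * mMoment (2 * (d' + 1 + m)) κ ^ ((1 : ℝ)/2) ≤
      ENNReal.ofReal R}

/-- Hypothesis `H̃_q(k,m,e)`. -/
def HqT (e : ℝ → ℝ) (q k m : ℕ) (μ : SignedMeasure (Vec d)) : Prop :=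
  ∃ a : ℝ, 1 < a ∧ ∃ Cb : ℝ, ∀ᶠ R in atTop,
    La a R ^ (1 + ((k : ℝ) + q) / (2 * m)) * betaE e (La a R ^ ((d : ℝ) / (2 * m))) / R *
      dkSet k μ (MsetT d m q R) ≤ Cb

/-! Hermite functions -/

/-- Physicists' Hermite polynomial `H_n(t) = (−1)^n e^{t²} (d/dt)^n e^{−t²}` (as a function). -/
def physHermite (n : ℕ) : ℝ → ℝ :=
  fun t => (-1 : ℝ) ^ n * Real.exp (t ^ 2) * deriv^[n] (fun s => Real.exp (-s ^ 2)) t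

/-- `L²`-normalized Hermite functions `h_n`. -/
def hermiteFun (n : ℕ) : ℝ → ℝ :=
  fun t => ((2:ℝ) ^ n * n.factorial * Real.sqrt Real.pi) ^ (-(1:ℝ)/2) * physHermite n t *
    Real.exp (-t ^ 2 / 2)

/-- `d`-dimensional Hermite function `𝓗_α`. -/
def hermd (α : Fin d → ℕ) (x : Vec d) : ℝ := ∏ i, hermiteFun (α i) (x i)

/-- Kernel `𝓗_n(x,y) = Σ_{|α| = n} 𝓗_α(x) 𝓗_α(y)`. -/
def hermKer (d' n : ℕ) (x y : Vec d') : ℝ :=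
  ∑' α : {α : Fin d' → ℕ // mOrder α = n}, hermd α.1 x * hermd α.1 y

/-- Kernel `𝓗_n^a(x,y) = Σ_{j=0}^∞ a(j/4^n) 𝓗_j(x,y)`. -/
def hermKerA (a : ℝ → ℝ) (d' n : ℕ) (x y : Vec d') : ℝ :=
  ∑' j : ℕ, a (j / 4 ^ n) * hermKer d' j x y

/-- Kernel convolution `(Φ * f)(x) = ∫ Φ(x,y) f(y) dy`. -/
def kconv (Φ : Vec d → Vec d → ℝ) (f : Vec d → ℝ) (x : Vec d) : ℝ :=
  ∫ y, Φ x y * f y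

/-- `‖a‖_l = Σ_{i=0}^l sup_{t ≥ 0} |a^{(i)}(t)|`. -/
def aNorm (l : ℕ) (a : ℝ → ℝ) : ℝ :=
  ∑ i ∈ Finset.range (l + 1), ⨆ t : Set.Ici (0:ℝ), |iteratedDeriv i a t|

/-- `d_k` written directly for densities: between `μ_f(dx) = f(x)dx` and `μ_g(dx) = g(x)dx`. -/
def dkFun (k : ℕ) (f g : Vec d → ℝ) : ℝ :=
  sSup {r : ℝ | ∃ φ : Vec d → ℝ, ContDiff ℝ (⊤ : ℕ∞) φ ∧ supNorm k φ ≤ 1 ∧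
    r = |∫ x, φ x * (f x - g x)|}

/-- `d_{k,e_*}` written directly for densities. -/
def dkEFun (e : ℝ → ℝ) (k : ℕ) (f g : Vec d → ℝ) : ℝ :=
  sSup {r : ℝ | ∃ φ : Vec d → ℝ,
    (∑' α : {α : Fin d → ℕ // mOrder α ≤ k}, luxNorm (econj e) (mderiv α.1 φ)) ≠ ∞ ∧
    luxNorm (econj e) φ ≤ 1 ∧ r = |∫ x, φ x * (f x - g x)|}

end

noncomputable section

variable {d : ℕ}

/-- Dual distance `‖μ̃ − f̃‖_{W_*^{k,∞}}` between a signed measure and a function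
(both regarded as elements of `Y = W_*^{k,∞}`). -/
def YdistM (k : ℕ) (μ : SignedMeasure (Vec d)) (f : Vec d → ℝ) : ℝ :=
  sSup {r : ℝ | ∃ φ : Vec d → ℝ, ContDiff ℝ (⊤ : ℕ∞) φ ∧ supNorm k φ ≤ 1 ∧
    r = |sInt μ φ - ∫ x, φ x * f x|}

/-- Membership of `μ̃` in `S_{θ,m,aa}(X,Y)` for `X = W^{2m+q,2m,e}`, `Y = W_*^{k,∞}`. -/
def memS (e : ℝ → ℝ) (q k m : ℕ) (θ aa : ℝ) (μ : SignedMeasure (Vec d)) : Prop :=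
  ∃ F : ℕ → Vec d → ℝ,
    (∑' n : ℕ,
      (ENNReal.ofReal ((2:ℝ) ^ (((n:ℝ) + 1) * θ) * ((n:ℝ) + 1) ^ aa) *
          ENNReal.ofReal (YdistM k μ (F (n+1)))
        + ((2:ℝ≥0∞) ^ (2 * (n+1) * m))⁻¹ * wnorm e (2*m+q) (2*m) (F (n+1)))) ≠ ∞

/-- `K(μ̃, t)` for `X = W^{2m+q,2m,e}`, `Y = W_*^{k,∞}`. -/
def KfnM (e : ℝ → ℝ) (q k m : ℕ) (μ : SignedMeasure (Vec d)) (t : ℝ) : ℝ≥0∞ :=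
  ⨅ f : Vec d → ℝ, ENNReal.ofReal (YdistM k μ f) + ENNReal.ofReal t * wnorm e (2*m+q) (2*m) f

/-- Membership of `μ̃` in `K_{ρ,b}(X,Y)`. -/
def memK (e : ℝ → ℝ) (q k m : ℕ) (r b : ℝ) (μ : SignedMeasure (Vec d)) : Prop :=
  (∫⁻ t in Set.Ioo (0:ℝ) 1,
    ENNReal.ofReal (t ^ (-r - 1) * |Real.log t| ^ b) * KfnM e q k m μ t) ≠ ∞

/-- Membership of `μ̃` in `B_{u,v}(X,Y)`. -/
def memB (e : ℝ → ℝ) (q k m : ℕ) (u v : ℝ) (μ : SignedMeasure (Vec d)) : Prop :=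
  ∃ Cb : ℝ, ∀ᶠ R in atTop,
    R ^ u * Real.log R ^ v *
      sInf {r : ℝ | ∃ f : Vec d → ℝ, wnorm e (2*m+q) (2*m) f ≤ ENNReal.ofReal R ∧
        r = YdistM k μ f} ≤ Cb

/-- The Sobolev norm `Σ_{|α|≤k} ‖∂_α φ‖_{L^p}` of a test function. -/
def sobPNorm (k : ℕ) (p : ℝ) (φ : Vec d → ℝ) : ℝ≥0∞ :=
  ∑' α : {α : Fin d → ℕ // mOrder α ≤ k}, eLpNorm (mderiv α.1 φ) (ENNReal.ofReal p) volume

/-- The weighted Sobolev norm `‖f‖_{k,l,p} = Σ_{|γ|≤l} Σ_{|α|≤k} ‖x^γ ∂_α f‖_{L^p}`. -/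
def wnormP (p : ℝ) (k l : ℕ) (f : Vec d → ℝ) : ℝ≥0∞ :=
  ∑' γ : {γ : Fin d → ℕ // mOrder γ ≤ l}, ∑' α : {α : Fin d → ℕ // mOrder α ≤ k},
    eLpNorm (fun x => (∏ i, x i ^ γ.1 i) * mderiv α.1 f x) (ENNReal.ofReal p) volume

/-- Dual distance in `Y = W^{−k,p_*} = (W^{k,p_*})^*` between a functional `u` and (the
functional associated with) a function `f`. -/
def YdistD (k : ℕ) (ps : ℝ) (u : (Vec d → ℝ) → ℝ) (f : Vec d → ℝ) : ℝ :=
  sSup {r : ℝ | ∃ φ : Vec d → ℝ, ContDiff ℝ (⊤ : ℕ∞) φ ∧ HasCompactSupport φ ∧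
    sobPNorm k ps φ ≤ 1 ∧ r = |u φ - ∫ x, φ x * f x|}

/-- `K(u,t)` for `X = W^{2m+q,2m,p}`, `Y = W^{−k,p_*}`. -/
def KfnD (p ps : ℝ) (q k m : ℕ) (u : (Vec d → ℝ) → ℝ) (t : ℝ) : ℝ≥0∞ :=
  ⨅ f : Vec d → ℝ,
    ENNReal.ofReal (YdistD k ps u f) + ENNReal.ofReal t * wnormP p (2*m+q) (2*m) f

/-- Membership of `u` in the interpolation space `(W^{2m+q,2m,p}, W^{−k,p_*})_γ`. -/
def memInterpD (p ps ga : ℝ) (q k m : ℕ) (u : (Vec d → ℝ) → ℝ) : Prop :=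
  (∫⁻ t in Set.Ioi (0:ℝ), ENNReal.ofReal (t ^ (-ga - 1)) * KfnD p ps q k m u t) ≠ ∞

/-- Dual distance in `Y = W_*^{k,∞}` between a functional `u` and a function `f`. -/
def YdistU (k : ℕ) (u : (Vec d → ℝ) → ℝ) (f : Vec d → ℝ) : ℝ :=
  sSup {r : ℝ | ∃ φ : Vec d → ℝ, ContDiff ℝ (⊤ : ℕ∞) φ ∧ supNorm k φ ≤ 1 ∧
    r = |u φ - ∫ x, φ x * f x|}

/-- Membership of `u` in `B_{θ,β}(W^{n,l,e}, W_*^{k,∞})`. -/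
def memBU (e : ℝ → ℝ) (n l k : ℕ) (θ β : ℝ) (u : (Vec d → ℝ) → ℝ) : Prop :=
  ∃ Cb : ℝ, ∀ᶠ R in atTop,
    R ^ θ * Real.log R ^ β *
      sInf {r : ℝ | ∃ f : Vec d → ℝ, wnorm e n l f ≤ ENNReal.ofReal R ∧
        r = YdistU k u f} ≤ Cb

/-- `K(u,t)` for `X = W^{n,l,e}`, `Y = W_*^{k,∞}`. -/
def KfnU (e : ℝ → ℝ) (n l k : ℕ) (u : (Vec d → ℝ) → ℝ) (t : ℝ) : ℝ≥0∞ :=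
  ⨅ f : Vec d → ℝ, ENNReal.ofReal (YdistU k u f) + ENNReal.ofReal t * wnorm e n l f

/-- Membership of `u` in the interpolation space `(W^{n,l,e}, W_*^{k,∞})_γ`. -/
def memInterpU (e : ℝ → ℝ) (n l k : ℕ) (ga : ℝ) (u : (Vec d → ℝ) → ℝ) : Prop :=
  (∫⁻ t in Set.Ioi (0:ℝ), ENNReal.ofReal (t ^ (-ga - 1)) * KfnU e n l k u t) ≠ ∞

/-- Super kernel: nonnegative, supported in the unit ball, integral one, all nontrivial
moments vanish. -/
structure IsSuperKernel (d' : ℕ) (φ : Vec d' → ℝ) : Prop where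
  nonneg : ∀ x, 0 ≤ φ x
  supp : ∀ x, φ x ≠ 0 → ‖x‖ ≤ 1
  total : (∫ x, φ x) = 1
  moments : ∀ α : Fin d' → ℕ, α ≠ 0 → (∫ x, (∏ i, x i ^ α i) * φ x) = 0

/-- `φ_δ(y) = δ^{−d} φ(y/δ)`. -/
def dilK (φ : Vec d → ℝ) (δ : ℝ) (y : Vec d) : ℝ := φ (δ⁻¹ • y) / δ ^ d

/-- Convolution of functions `(f * g)(x) = ∫ f(y) g(x−y) dy`. -/
def convF (f g : Vec d → ℝ) (x : Vec d) : ℝ := ∫ y, f y * g (x - y)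

end

noncomputable section Abstract

variable {X Y : Type*} [NormedAddCommGroup X] [NormedAddCommGroup Y]

/-- `K(y,t) = inf_{x ∈ X} (‖y − Jx‖_Y + t‖x‖_X)` for a continuous embedding `J : X → Y`. -/
def Kab (J : X → Y) (y : Y) (t : ℝ) : ℝ≥0∞ :=
  ⨅ x : X, ENNReal.ofReal ‖y - J x‖ + ENNReal.ofReal t * ENNReal.ofReal ‖x‖

/-- `|y|_{γ,b} = ∫₀¹ t^{−γ} |ln t|^b K(y,t) dt/t`. -/
def normGB (J : X → Y) (ga b : ℝ) (y : Y) : ℝ≥0∞ :=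
  ∫⁻ t in Set.Ioo (0:ℝ) 1, ENNReal.ofReal (t ^ (-ga - 1) * |Real.log t| ^ b) * Kab J y t

/-- `π_{θ,m,a}(y,(x_n)_n) = Σ_{n=1}^∞ [2^{nθ} n^a ‖y−x_n‖_Y + 2^{−2nm} ‖x_n‖_X]`. -/
def piAb (J : X → Y) (θ aa : ℝ) (m : ℕ) (y : Y) (x : ℕ → X) : ℝ≥0∞ :=
  ∑' n : ℕ,
    (ENNReal.ofReal ((2:ℝ) ^ (((n:ℝ) + 1) * θ) * ((n:ℝ) + 1) ^ aa) *
        ENNReal.ofReal ‖y - J (x (n+1))‖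
      + ((2:ℝ≥0∞) ^ (2 * (n+1) * m))⁻¹ * ENNReal.ofReal ‖x (n+1)‖)

/-- `ρ^{X,Y}_{θ,m,a}(y)`. -/
def rhoAb (J : X → Y) (θ aa : ℝ) (m : ℕ) (y : Y) : ℝ≥0∞ :=
  ⨅ x : ℕ → X, piAb J θ aa m y x

/-- `d_Y(y, B_X(R))`. -/
def dYball (J : X → Y) (y : Y) (R : ℝ) : ℝ :=
  sInf {r : ℝ | ∃ x : X, ‖x‖ ≤ R ∧ r = ‖y - J x‖}

end Abstract


noncomputable section Stmt14Helpers

variable {X Y : Type*} [NormedAddCommGroup X] [NormedAddCommGroup Y]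

lemma Kab_le_norm (J : X → Y) (hJ : J 0 = 0) (y : Y) (t : ℝ) :
    Kab J y t ≤ ENNReal.ofReal ‖y‖ := by
  refine iInf_le_of_le 0 ?_
  simp [hJ]

lemma Kab_mono (J : X → Y) (y : Y) {s t : ℝ} (h : s ≤ t) : Kab J y s ≤ Kab J y t :=
  iInf_mono fun _ => add_le_add le_rfl (mul_le_mul_left (ENNReal.ofReal_le_ofReal h) _)

lemma Kab_le (J : X → Y) (y : Y) (t : ℝ) (x : X) :
    Kab J y t ≤ ENNReal.ofReal ‖y - J x‖ + ENNReal.ofReal t * ENNReal.ofReal ‖x‖ :=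
  iInf_le _ x

lemma Kab_scale (J : X → Y) (y : Y) {s t : ℝ} (hs : 0 < s) (h : s ≤ t) :
    Kab J y t ≤ ENNReal.ofReal (t / s) * Kab J y s := by
  have hts : (1:ℝ) ≤ t / s := (one_le_div hs).2 h
  conv_rhs => rw [Kab, ENNReal.mul_iInf_of_ne (by simpa using lt_of_lt_of_le one_pos hts)
    ENNReal.ofReal_ne_top]
  refine iInf_mono fun x => ?_
  rw [mul_add]
  refine add_le_add ?_ ?_
  · exact le_mul_of_one_le_left zero_le (ENNReal.one_le_ofReal.2 hts)
  · have hh : ENNReal.ofReal (t/s) * ENNReal.ofReal s = ENNReal.ofReal t := by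
      rw [← ENNReal.ofReal_mul (by positivity), div_mul_cancel₀ _ hs.ne']
    rw [← mul_assoc, hh]

lemma Kab_scale' (J : X → Y) (y : Y) {s t : ℝ} (hs : 0 < s) (h : s ≤ t) :
    ENNReal.ofReal (s / t) * Kab J y t ≤ Kab J y s := by
  have ht : 0 < t := lt_of_lt_of_le hs h
  calc ENNReal.ofReal (s / t) * Kab J y t
      ≤ ENNReal.ofReal (s / t) * (ENNReal.ofReal (t / s) * Kab J y s) :=
        mul_le_mul_right (Kab_scale J y hs h) _
    _ = ENNReal.ofReal (s / t * (t / s)) * Kab J y s := by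
        rw [ENNReal.ofReal_mul (by positivity), mul_assoc]
    _ = Kab J y s := by
        rw [div_mul_div_comm, mul_comm s t, div_self (by positivity), ENNReal.ofReal_one, one_mul]


/-- The discretization points `t_N = 2^{-N(2m+θ)} N^{-a}`. -/
def ttf (θ aa : ℝ) (m : ℕ) (N : ℕ) : ℝ :=
  (2:ℝ) ^ (-(N:ℝ) * (2*(m:ℝ)+θ)) * (N:ℝ) ^ (-aa)

/-- The coefficients `c_N = 2^{Nθ} N^a`. -/
def ccf (θ aa : ℝ) (N : ℕ) : ℝ := (2:ℝ) ^ ((N:ℝ) * θ) * (N:ℝ) ^ aa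

variable {θ aa : ℝ} {m : ℕ} {N : ℕ}

lemma ttf_pos (hN : 1 ≤ N) : 0 < ttf θ aa m N := by
  have hN' : (0:ℝ) < (N:ℝ) := by exact_mod_cast hN
  exact mul_pos (Real.rpow_pos_of_pos two_pos _) (Real.rpow_pos_of_pos hN' _)

lemma ccf_pos (hN : 1 ≤ N) : 0 < ccf θ aa N := by
  have hN' : (0:ℝ) < (N:ℝ) := by exact_mod_cast hN
  exact mul_pos (Real.rpow_pos_of_pos two_pos _) (Real.rpow_pos_of_pos hN' _)

lemma ttf_lt_one (hθ : 0 < θ) (ha : 0 ≤ aa) (hm : 1 ≤ m) (hN : 1 ≤ N) :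
    ttf θ aa m N < 1 := by
  have hN' : (1:ℝ) ≤ (N:ℝ) := by exact_mod_cast hN
  have h1 : (2:ℝ) ^ (-(N:ℝ) * (2*(m:ℝ)+θ)) < 1 := by
    apply Real.rpow_lt_one_of_one_lt_of_neg one_lt_two
    have hm' : (1:ℝ) ≤ (m:ℝ) := by exact_mod_cast hm
    nlinarith
  have h2 : ((N:ℝ)) ^ (-aa) ≤ 1 :=
    Real.rpow_le_one_of_one_le_of_nonpos hN' (by linarith)
  calc ttf θ aa m N ≤ (2:ℝ) ^ (-(N:ℝ) * (2*(m:ℝ)+θ)) * 1 := by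
        exact mul_le_mul_of_nonneg_left h2 (Real.rpow_pos_of_pos two_pos _).le
    _ < 1 := by rwa [mul_one]

/-- monotonicity in `N` -/
lemma ttf_anti (ha : 0 ≤ aa) {M : ℕ} (hM : 1 ≤ M) (hθ : 0 ≤ θ) (h : M ≤ N) :
    ttf θ aa m N ≤ ttf θ aa m M := by
  have hM' : (0:ℝ) < (M:ℝ) := by exact_mod_cast hM
  have hMN : (M:ℝ) ≤ (N:ℝ) := by exact_mod_cast h
  refine mul_le_mul ?_ ?_ (Real.rpow_pos_of_pos (by linarith) _).le
    (Real.rpow_pos_of_pos two_pos _).le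
  · apply Real.rpow_le_rpow_of_exponent_le one_le_two
    have hm' : (0:ℝ) ≤ (m:ℝ) := by positivity
    nlinarith
  · exact Real.rpow_le_rpow_of_nonpos hM' hMN (by linarith)

/-- `t_{N+1} ≤ 2^{-(2m+θ)} t_N`. -/
lemma ttf_succ_le (ha : 0 ≤ aa) (hN : 1 ≤ N) :
    ttf θ aa m (N+1) ≤ (2:ℝ) ^ (-(2*(m:ℝ)+θ)) * ttf θ aa m N := by
  have hN' : (0:ℝ) < (N:ℝ) := by exact_mod_cast hN
  have h1 : (2:ℝ) ^ (-((N:ℝ)+1) * (2*(m:ℝ)+θ)) =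
      (2:ℝ) ^ (-(2*(m:ℝ)+θ)) * (2:ℝ) ^ (-(N:ℝ) * (2*(m:ℝ)+θ)) := by
    rw [← Real.rpow_add two_pos]; ring_nf
  have h2 : ((N:ℝ)+1) ^ (-aa) ≤ (N:ℝ) ^ (-aa) :=
    Real.rpow_le_rpow_of_nonpos hN' (by linarith) (by linarith)
  unfold ttf
  push_cast
  rw [h1, mul_assoc]
  exact mul_le_mul_of_nonneg_left
    (mul_le_mul_of_nonneg_left h2 (Real.rpow_pos_of_pos two_pos _).le)
    (Real.rpow_pos_of_pos two_pos _).le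

/-- `2^{-(2m+θ)-a} t_N ≤ t_{N+1}`. -/
lemma ttf_succ_ge (ha : 0 ≤ aa) (hN : 1 ≤ N) :
    (2:ℝ) ^ (-(2*(m:ℝ)+θ) - aa) * ttf θ aa m N ≤ ttf θ aa m (N+1) := by
  have hN' : (1:ℝ) ≤ (N:ℝ) := by exact_mod_cast hN
  have hN1 : (0:ℝ) < (N:ℝ)+1 := by linarith
  have h2 : (2:ℝ) ^ (-aa) * (N:ℝ) ^ (-aa) ≤ ((N:ℝ)+1) ^ (-aa) := by
    rw [← Real.mul_rpow two_pos.le (by linarith : (0:ℝ) ≤ (N:ℝ))]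
    exact Real.rpow_le_rpow_of_nonpos hN1 (by linarith) (by linarith)
  have h1 : (2:ℝ) ^ (-(2*(m:ℝ)+θ)) * (2:ℝ) ^ (-(N:ℝ) * (2*(m:ℝ)+θ)) =
      (2:ℝ) ^ (-((N:ℝ)+1) * (2*(m:ℝ)+θ)) := by
    rw [← Real.rpow_add two_pos]; ring_nf
  unfold ttf
  push_cast
  calc (2:ℝ) ^ (-(2*(m:ℝ)+θ) - aa) * ((2:ℝ) ^ (-(N:ℝ) * (2*(m:ℝ)+θ)) * (N:ℝ) ^ (-aa))
      = ((2:ℝ) ^ (-(2*(m:ℝ)+θ)) * (2:ℝ) ^ (-(N:ℝ) * (2*(m:ℝ)+θ))) *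
        ((2:ℝ) ^ (-aa) * (N:ℝ) ^ (-aa)) := by
        rw [show (-(2*(m:ℝ)+θ) - aa) = (-(2*(m:ℝ)+θ)) + (-aa) by ring, Real.rpow_add two_pos]
        ring
    _ ≤ (2:ℝ) ^ (-((N:ℝ)+1) * (2*(m:ℝ)+θ)) * ((N:ℝ)+1) ^ (-aa) := by
        rw [h1]
        exact mul_le_mul_of_nonneg_left h2 (Real.rpow_pos_of_pos two_pos _).le


variable {θ aa : ℝ} {m : ℕ} {N : ℕ}

/-- decomposition of `t_N ^ c`. -/
lemma ttf_rpow (hN : 1 ≤ N) (c : ℝ) :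
    (ttf θ aa m N) ^ c
      = (2:ℝ) ^ ((-(N:ℝ) * (2*(m:ℝ)+θ)) * c) * (N:ℝ) ^ ((-aa) * c) := by
  have hN' : (0:ℝ) < (N:ℝ) := by exact_mod_cast hN
  rw [ttf, Real.mul_rpow (by positivity) (by positivity),
    ← Real.rpow_mul (by norm_num), ← Real.rpow_mul hN'.le]

lemma abs_log_ttf (hθ : 0 < θ) (ha : 0 ≤ aa) (hN : 1 ≤ N) :
    |Real.log (ttf θ aa m N)| = (N:ℝ) * (2*(m:ℝ)+θ) * Real.log 2 + aa * Real.log N := by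
  have hN' : (1:ℝ) ≤ (N:ℝ) := by exact_mod_cast hN
  have hN0 : (0:ℝ) < (N:ℝ) := by linarith
  have hlog : Real.log (ttf θ aa m N)
      = -((N:ℝ) * (2*(m:ℝ)+θ) * Real.log 2 + aa * Real.log N) := by
    rw [ttf, Real.log_mul (by positivity) (by positivity),
      Real.log_rpow two_pos, Real.log_rpow hN0]
    ring
  rw [hlog, abs_neg, abs_of_nonneg]
  have h2 : (0:ℝ) < Real.log 2 := Real.log_pos one_lt_two
  have hlN : 0 ≤ Real.log (N:ℝ) := Real.log_nonneg hN'
  have hm0 : (0:ℝ) ≤ (m:ℝ) := by positivity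
  have : (0:ℝ) ≤ (N:ℝ) * (2*(m:ℝ)+θ) := by nlinarith
  nlinarith

lemma abs_log_ttf_lb (hθ : 0 < θ) (ha : 0 ≤ aa) (hm : 1 ≤ m) (hN : 1 ≤ N) :
    (N:ℝ) ≤ |Real.log (ttf θ aa m N)| := by
  rw [abs_log_ttf hθ ha hN]
  have hN' : (1:ℝ) ≤ (N:ℝ) := by exact_mod_cast hN
  have hm' : (1:ℝ) ≤ (m:ℝ) := by exact_mod_cast hm
  have h2 : (0.6931471803:ℝ) < Real.log 2 := Real.log_two_gt_d9
  have hlN : 0 ≤ Real.log (N:ℝ) := Real.log_nonneg hN'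
  have hσl : 1 ≤ (2*(m:ℝ)+θ) * Real.log 2 := by nlinarith
  have h3 : (N:ℝ) * 1 ≤ (N:ℝ) * ((2*(m:ℝ)+θ) * Real.log 2) :=
    mul_le_mul_of_nonneg_left hσl (by linarith)
  have h4 : 0 ≤ aa * Real.log (N:ℝ) := mul_nonneg ha hlN
  nlinarith [h3, h4]

lemma abs_log_ttf_ub (hθ : 0 < θ) (ha : 0 ≤ aa) (hN : 1 ≤ N) :
    |Real.log (ttf θ aa m N)| ≤ (N:ℝ) * (2*(m:ℝ)+θ+aa) := by
  rw [abs_log_ttf hθ ha hN]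
  have hN' : (1:ℝ) ≤ (N:ℝ) := by exact_mod_cast hN
  have h2 : Real.log 2 < 0.6931471808 := Real.log_two_lt_d9
  have h2' : (0:ℝ) < Real.log 2 := Real.log_pos one_lt_two
  have hlN : Real.log (N:ℝ) ≤ (N:ℝ) := by
    have := Real.log_le_sub_one_of_pos (by linarith : (0:ℝ) < (N:ℝ))
    linarith
  have hm0 : (0:ℝ) ≤ (m:ℝ) := by positivity
  have hlN0 : 0 ≤ Real.log (N:ℝ) := Real.log_nonneg hN'
  have hNσ : (0:ℝ) ≤ (N:ℝ)*(2*(m:ℝ)+θ) := by nlinarith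
  have h4 : (N:ℝ)*(2*(m:ℝ)+θ)*Real.log 2 ≤ (N:ℝ)*(2*(m:ℝ)+θ) := by nlinarith
  have h5 : aa * Real.log (N:ℝ) ≤ aa * (N:ℝ) := mul_le_mul_of_nonneg_left hlN ha
  nlinarith [h4, h5]

/-- the weight function is decreasing on `(0,1)`. -/
lemma weight_anti {ga b : ℝ} (hga : -ga - 1 ≤ 0) (hb : 0 ≤ b) {s t : ℝ}
    (hs : 0 < s) (hst : s ≤ t) (ht : t < 1) :
    t ^ (-ga - 1) * |Real.log t| ^ b ≤ s ^ (-ga - 1) * |Real.log s| ^ b := by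
  have ht0 : 0 < t := lt_of_lt_of_le hs hst
  have h1 : t ^ (-ga-1) ≤ s ^ (-ga-1) := Real.rpow_le_rpow_of_nonpos hs hst hga
  have h2 : |Real.log t| ≤ |Real.log s| := by
    rw [abs_of_nonpos (Real.log_nonpos ht0.le ht.le),
      abs_of_nonpos (Real.log_nonpos hs.le (hst.trans ht.le))]
    have := Real.log_le_log hs hst
    linarith
  exact mul_le_mul h1 (Real.rpow_le_rpow (abs_nonneg _) h2 hb) (by positivity) (by positivity)

/-- `c_N t_N = 2^{-2Nm}`. -/
lemma ccf_mul_ttf (hN : 1 ≤ N) :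
    ccf θ aa N * ttf θ aa m N = (2:ℝ) ^ (-(2 * (N:ℝ) * (m:ℝ))) := by
  have hN' : (0:ℝ) < (N:ℝ) := by exact_mod_cast hN
  rw [ccf, ttf]
  calc (2:ℝ) ^ ((N:ℝ)*θ) * (N:ℝ) ^ aa * ((2:ℝ) ^ (-(N:ℝ)*(2*(m:ℝ)+θ)) * (N:ℝ) ^ (-aa))
      = ((2:ℝ) ^ ((N:ℝ)*θ) * (2:ℝ) ^ (-(N:ℝ)*(2*(m:ℝ)+θ))) * ((N:ℝ) ^ aa * (N:ℝ) ^ (-aa)) := by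
        ring
    _ = (2:ℝ) ^ ((N:ℝ)*θ + -(N:ℝ)*(2*(m:ℝ)+θ)) * (N:ℝ) ^ (aa + -aa) := by
        rw [Real.rpow_add two_pos, Real.rpow_add hN']
    _ = (2:ℝ) ^ (-(2 * (N:ℝ) * (m:ℝ))) := by
        rw [show aa + -aa = 0 by ring, Real.rpow_zero, mul_one,
          show (N:ℝ)*θ + -(N:ℝ)*(2*(m:ℝ)+θ) = -(2 * (N:ℝ) * (m:ℝ)) by ring]

/-- Key lower estimate (lemma A). -/
lemma realA (hθ : 0 < θ) (ha : 0 ≤ aa) (hm : 1 ≤ m) (hN : 1 ≤ N) :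
    ccf θ aa N ≤ (2:ℝ) ^ (2*(m:ℝ)+θ+aa+1) *
      ((ttf θ aa m N) ^ (-(θ/(2*(m:ℝ)+θ)) - 1) *
        |Real.log (ttf θ aa m N)| ^ (2*(m:ℝ)*aa/(2*(m:ℝ)+θ)) *
        (ttf θ aa m (N+1) / ttf θ aa m N * (ttf θ aa m N - ttf θ aa m (N+1)))) := by
  have hN' : (1:ℝ) ≤ (N:ℝ) := by exact_mod_cast hN
  have hN0 : (0:ℝ) < (N:ℝ) := by linarith
  have hm' : (1:ℝ) ≤ (m:ℝ) := by exact_mod_cast hm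
  set σ : ℝ := 2*(m:ℝ)+θ with hσdef
  have hσ : 2 ≤ σ := by rw [hσdef]; linarith
  have hσ0 : (0:ℝ) < σ := by linarith
  set ga : ℝ := θ/σ with hgadef
  set b : ℝ := 2*(m:ℝ)*aa/σ with hbdef
  have hb0 : 0 ≤ b := by positivity
  set t : ℝ := ttf θ aa m N with htdef
  set t' : ℝ := ttf θ aa m (N+1) with ht'def
  have ht : 0 < t := ttf_pos hN
  have ht' : 0 < t' := ttf_pos (by omega)
  -- step f1 : ratio lower bound
  have f1 : (2:ℝ) ^ (-σ - aa) ≤ t' / t := by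
    rw [le_div_iff₀ ht]
    exact ttf_succ_ge ha hN
  -- step f2 : difference lower bound
  have f2 : t / 2 ≤ t - t' := by
    have h12 : (2:ℝ) ^ (-σ) ≤ 1/2 := by
      have : (2:ℝ) ^ (-σ) ≤ (2:ℝ) ^ (-1:ℝ) :=
        Real.rpow_le_rpow_of_exponent_le one_le_two (by linarith)
      rwa [Real.rpow_neg_one, ← one_div] at this
    have := ttf_succ_le (θ := θ) (aa := aa) (m := m) ha hN
    have ht'le : t' ≤ (1/2) * t := le_trans this
      (mul_le_mul_of_nonneg_right h12 ht.le)
    linarith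
  -- step h₂ : ratio * diff lower bound
  have h₂ : (2:ℝ) ^ (-σ - aa - 1) * t ≤ t' / t * (t - t') := by
    have := mul_le_mul f1 f2 (by positivity) (by positivity)
    calc (2:ℝ) ^ (-σ - aa - 1) * t = (2:ℝ) ^ (-σ - aa) * (t/2) := by
          rw [show -σ - aa - 1 = (-σ - aa) + (-1) by ring, Real.rpow_add two_pos,
            Real.rpow_neg_one]
          ring
      _ ≤ t' / t * (t - t') := this
  -- step h₁ : log power lower bound
  have h₁ : (N:ℝ) ^ b ≤ |Real.log t| ^ b :=
    Real.rpow_le_rpow hN0.le (abs_log_ttf_lb hθ ha hm hN) hb0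
  -- main chain
  have key : (2:ℝ) ^ (-(σ + aa + 1)) * ccf θ aa N
      ≤ t ^ (-ga - 1) * |Real.log t| ^ b * (t' / t * (t - t')) := by
    have hmul : (t ^ (-ga - 1) * (N:ℝ) ^ b) * ((2:ℝ) ^ (-σ - aa - 1) * t)
        ≤ (t ^ (-ga - 1) * |Real.log t| ^ b) * (t' / t * (t - t')) := by
      refine mul_le_mul (mul_le_mul_of_nonneg_left h₁ (by positivity)) h₂
        (by positivity) (by positivity)
    calc (2:ℝ) ^ (-(σ + aa + 1)) * ccf θ aa N
        = (t ^ (-ga - 1) * (N:ℝ) ^ b) * ((2:ℝ) ^ (-σ - aa - 1) * t) := by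
          have e5 : t ^ (-ga - 1) * t = t ^ (-ga) := by
            rw [← Real.rpow_add_one ht.ne' (-ga - 1)]
            norm_num
          have e6 : t ^ (-ga) = (2:ℝ) ^ ((N:ℝ)*θ) * (N:ℝ) ^ (aa*ga) := by
            rw [htdef, ttf_rpow hN]
            congr 1
            · congr 1
              rw [hgadef]; field_simp; ring
            · congr 1
              rw [hgadef]; ring
          have e7 : (N:ℝ) ^ (aa*ga) * (N:ℝ) ^ b = (N:ℝ) ^ aa := by
            rw [← Real.rpow_add hN0]
            congr 1
            rw [hgadef, hbdef]; field_simp; ring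
          calc (2:ℝ) ^ (-(σ + aa + 1)) * ccf θ aa N
              = (2:ℝ) ^ (-σ - aa - 1) * ((2:ℝ) ^ ((N:ℝ)*θ) * (N:ℝ) ^ aa) := by
                rw [ccf]; ring_nf
            _ = (2:ℝ) ^ (-σ - aa - 1) * ((2:ℝ) ^ ((N:ℝ)*θ) * ((N:ℝ) ^ (aa*ga) * (N:ℝ) ^ b)) := by
                rw [e7]
            _ = (t ^ (-ga) * (N:ℝ) ^ b) * (2:ℝ) ^ (-σ - aa - 1) := by
                rw [e6]; ring
            _ = (t ^ (-ga - 1) * (N:ℝ) ^ b) * ((2:ℝ) ^ (-σ - aa - 1) * t) := by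
                rw [← e5]; ring
      _ ≤ _ := hmul
  -- finish
  have h2pos : (0:ℝ) < (2:ℝ) ^ (σ + aa + 1) := Real.rpow_pos_of_pos two_pos _
  have := mul_le_mul_of_nonneg_left key h2pos.le
  have hone : (2:ℝ) ^ (σ+aa+1) * (2:ℝ) ^ (-(σ+aa+1)) = 1 := by
    rw [← Real.rpow_add two_pos, show (σ+aa+1) + -(σ+aa+1) = (0:ℝ) by ring, Real.rpow_zero]
  calc ccf θ aa N = (2:ℝ) ^ (σ + aa + 1) * ((2:ℝ) ^ (-(σ + aa + 1)) * ccf θ aa N) := by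
        rw [← mul_assoc, hone, one_mul]
    _ ≤ (2:ℝ) ^ (σ+aa+1) * (t ^ (-ga - 1) * |Real.log t| ^ b * (t' / t * (t - t'))) := this


/-- Key upper estimate (lemma B). -/
lemma realB (hθ : 0 < θ) (ha : 0 ≤ aa) (hm : 1 ≤ m) (hN : 1 ≤ N) :
    (ttf θ aa m (N+1)) ^ (-(θ/(2*(m:ℝ)+θ)) - 1) *
      |Real.log (ttf θ aa m (N+1))| ^ (2*(m:ℝ)*aa/(2*(m:ℝ)+θ)) * ttf θ aa m N
    ≤ ((2:ℝ) ^ (2*(m:ℝ)+θ+aa) * (2:ℝ) ^ θ * (2:ℝ) ^ (aa*(θ/(2*(m:ℝ)+θ))) *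
        (2*(2*(m:ℝ)+θ+aa)) ^ (2*(m:ℝ)*aa/(2*(m:ℝ)+θ))) * ccf θ aa N := by
  have hN' : (1:ℝ) ≤ (N:ℝ) := by exact_mod_cast hN
  have hN0 : (0:ℝ) < (N:ℝ) := by linarith
  have hm' : (1:ℝ) ≤ (m:ℝ) := by exact_mod_cast hm
  set σ : ℝ := 2*(m:ℝ)+θ with hσdef
  have hσ0 : (0:ℝ) < σ := by rw [hσdef]; linarith
  set ga : ℝ := θ/σ with hgadef
  set b : ℝ := 2*(m:ℝ)*aa/σ with hbdef
  have hga0 : 0 ≤ ga := by positivity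
  have hb0 : 0 ≤ b := by positivity
  set t : ℝ := ttf θ aa m N with htdef
  set t' : ℝ := ttf θ aa m (N+1) with ht'def
  have ht : 0 < t := ttf_pos hN
  have ht' : 0 < t' := ttf_pos (by omega)
  set P : ℝ := (N:ℝ)
  -- u1
  have hone : (2:ℝ) ^ (σ+aa) * (2:ℝ) ^ (-σ-aa) = 1 := by
    rw [← Real.rpow_add two_pos, show (σ+aa) + (-σ-aa) = (0:ℝ) by ring, Real.rpow_zero]
  have u1 : t ≤ (2:ℝ) ^ (σ+aa) * t' := by
    have := mul_le_mul_of_nonneg_left (ttf_succ_ge (θ := θ) (aa := aa) (m := m) ha hN)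
      (Real.rpow_pos_of_pos two_pos (σ+aa)).le
    calc t = ((2:ℝ) ^ (σ+aa) * (2:ℝ) ^ (-σ-aa)) * t := by rw [hone, one_mul]
      _ = (2:ℝ) ^ (σ+aa) * ((2:ℝ) ^ (-σ-aa) * t) := by ring
      _ ≤ (2:ℝ) ^ (σ+aa) * t' := by
          have h := ttf_succ_ge (θ := θ) (aa := aa) (m := m) ha hN
          have h' : (2:ℝ) ^ (-σ-aa) * t ≤ t' := by
            rw [show -σ-aa = -(2*(m:ℝ)+θ) - aa by rw [hσdef]]
            exact h
          exact mul_le_mul_of_nonneg_left h' (Real.rpow_pos_of_pos two_pos _).le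
  -- e5'
  have e5' : t' ^ (-ga - 1) * t' = t' ^ (-ga) := by
    rw [← Real.rpow_add_one ht'.ne' (-ga - 1)]
    norm_num
  -- u3 : decomposition of t'^(-ga)
  have u3 : t' ^ (-ga) = (2:ℝ) ^ ((P+1)*θ) * (P+1) ^ (aa*ga) := by
    rw [ht'def, ttf_rpow (by omega)]
    have hc : ((N+1 : ℕ):ℝ) = P + 1 := by push_cast; ring
    rw [hc]
    congr 1
    · congr 1
      rw [hgadef]; field_simp; ring
    · congr 1
      rw [hgadef]; ring
  -- u4
  have hP1 : (0:ℝ) < P + 1 := by positivity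
  have u4 : (P+1) ^ (aa*ga) ≤ (2:ℝ) ^ (aa*ga) * P ^ (aa*ga) := by
    rw [← Real.mul_rpow two_pos.le hN0.le]
    exact Real.rpow_le_rpow hP1.le (by linarith) (by positivity)
  -- u6
  have u6 : |Real.log t'| ^ b ≤ (2*(σ+aa)) ^ b * P ^ b := by
    have h1 : |Real.log t'| ≤ (P+1) * (σ+aa) := by
      have := abs_log_ttf_ub (θ := θ) (aa := aa) (m := m) (N := N+1) hθ ha (by omega)
      have hc : ((N+1 : ℕ):ℝ) = P + 1 := by push_cast; ring
      rw [ht'def]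
      calc |Real.log (ttf θ aa m (N+1))| ≤ ((N+1:ℕ):ℝ) * (2*(m:ℝ)+θ+aa) := this
        _ = (P+1) * (σ+aa) := by rw [hc, hσdef]
    have h2 : (P+1) * (σ+aa) ≤ (2*(σ+aa)) * P := by nlinarith
    calc |Real.log t'| ^ b ≤ ((2*(σ+aa)) * P) ^ b :=
          Real.rpow_le_rpow (abs_nonneg _) (h1.trans h2) hb0
      _ = (2*(σ+aa)) ^ b * P ^ b := Real.mul_rpow (by positivity) hN0.le
  -- u7
  have u7 : P ^ (aa*ga) * P ^ b = P ^ aa := by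
    rw [← Real.rpow_add hN0]
    congr 1
    rw [hgadef, hbdef]; field_simp; ring
  -- u5
  have u5 : (2:ℝ) ^ ((P+1)*θ) = (2:ℝ) ^ θ * (2:ℝ) ^ (P*θ) := by
    rw [show (P+1)*θ = θ + P*θ by ring, Real.rpow_add two_pos]
  -- chain
  calc t' ^ (-ga - 1) * |Real.log t'| ^ b * t
      ≤ t' ^ (-ga - 1) * |Real.log t'| ^ b * ((2:ℝ) ^ (σ+aa) * t') :=
        mul_le_mul_of_nonneg_left u1 (by positivity)
    _ = (2:ℝ) ^ (σ+aa) * (t' ^ (-ga - 1) * t') * |Real.log t'| ^ b := by ring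
    _ = (2:ℝ) ^ (σ+aa) * ((2:ℝ) ^ θ * (2:ℝ) ^ (P*θ)) * ((P+1) ^ (aa*ga) * |Real.log t'| ^ b) := by
        rw [e5', u3, u5]; ring
    _ ≤ (2:ℝ) ^ (σ+aa) * ((2:ℝ) ^ θ * (2:ℝ) ^ (P*θ)) *
        (((2:ℝ) ^ (aa*ga) * P ^ (aa*ga)) * ((2*(σ+aa)) ^ b * P ^ b)) := by
        refine mul_le_mul_of_nonneg_left ?_ (by positivity)
        exact mul_le_mul u4 u6 (by positivity) (by positivity)
    _ = ((2:ℝ) ^ (σ+aa) * (2:ℝ) ^ θ * (2:ℝ) ^ (aa*ga) * (2*(σ+aa)) ^ b) *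
        ((2:ℝ) ^ (P*θ) * (P ^ (aa*ga) * P ^ b)) := by ring
    _ = ((2:ℝ) ^ (σ+aa) * (2:ℝ) ^ θ * (2:ℝ) ^ (aa*ga) * (2*(σ+aa)) ^ b) * ccf θ aa N := by
        rw [u7, ccf]


-- ### new material

lemma rearr (A W R D K : ℝ≥0∞) : A * (W * (R * D)) * K = A * ((W * (R * K)) * D) := by ring

lemma rearr2 (W Q T : ℝ≥0∞) : W * Q * T = W * T * Q := by ring


/-- the weight exponent facts -/
lemma hga_le (hθ : 0 < θ) (hm : 1 ≤ m) : -(θ/(2*(m:ℝ)+θ)) - 1 ≤ 0 := by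
  have hm' : (1:ℝ) ≤ (m:ℝ) := by exact_mod_cast hm
  have : 0 ≤ θ/(2*(m:ℝ)+θ) := by positivity
  linarith

lemma hb_nonneg (hθ : 0 < θ) (ha : 0 ≤ aa) (hm : 1 ≤ m) : 0 ≤ 2*(m:ℝ)*aa/(2*(m:ℝ)+θ) := by
  have hm' : (1:ℝ) ≤ (m:ℝ) := by exact_mod_cast hm
  positivity

/-- Block lower bound. -/
lemma blockLower (J : X → Y) (y : Y) (hθ : 0 < θ) (ha : 0 ≤ aa) (hm : 1 ≤ m) (hN : 1 ≤ N) :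
    ENNReal.ofReal (ccf θ aa N) * Kab J y (ttf θ aa m N)
      ≤ ENNReal.ofReal ((2:ℝ) ^ (2*(m:ℝ)+θ+aa+1)) *
        ∫⁻ t in Set.Ioc (ttf θ aa m (N+1)) (ttf θ aa m N),
          ENNReal.ofReal (t ^ (-(θ/(2*(m:ℝ)+θ)) - 1) *
            |Real.log t| ^ (2*(m:ℝ)*aa/(2*(m:ℝ)+θ))) * Kab J y t := by
  set ga : ℝ := θ/(2*(m:ℝ)+θ)
  set b : ℝ := 2*(m:ℝ)*aa/(2*(m:ℝ)+θ)
  set t : ℝ := ttf θ aa m N with htdef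
  set t' : ℝ := ttf θ aa m (N+1) with ht'def
  have ht : 0 < t := ttf_pos hN
  have ht' : 0 < t' := ttf_pos (by omega)
  have ht't : t' ≤ t := ttf_anti ha hN hθ.le (by omega)
  have ht1 : t < 1 := ttf_lt_one hθ ha hm hN
  set W : ℝ := t ^ (-ga - 1) * |Real.log t| ^ b with hWdef
  have hW0 : 0 ≤ W := by positivity
  -- pointwise bound
  have hpt : ∀ s ∈ Set.Ioc t' t,
      ENNReal.ofReal W * Kab J y t' ≤
        ENNReal.ofReal (s ^ (-ga - 1) * |Real.log s| ^ b) * Kab J y s := by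
    intro s hs
    refine mul_le_mul ?_ (Kab_mono J y hs.1.le) zero_le zero_le
    exact ENNReal.ofReal_le_ofReal
      (weight_anti (hga_le hθ hm) (hb_nonneg hθ ha hm) (ht'.trans hs.1) hs.2 ht1)
  calc ENNReal.ofReal (ccf θ aa N) * Kab J y t
      ≤ ENNReal.ofReal ((2:ℝ) ^ (2*(m:ℝ)+θ+aa+1) * (W * (t' / t * (t - t')))) * Kab J y t := by
        exact mul_le_mul_left (ENNReal.ofReal_le_ofReal (realA hθ ha hm hN)) _
    _ = ENNReal.ofReal ((2:ℝ) ^ (2*(m:ℝ)+θ+aa+1)) *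
        ((ENNReal.ofReal W * (ENNReal.ofReal (t'/t) * Kab J y t)) * ENNReal.ofReal (t - t')) := by
        rw [ENNReal.ofReal_mul (by positivity : (0:ℝ) ≤ (2:ℝ) ^ (2*(m:ℝ)+θ+aa+1)),
          ENNReal.ofReal_mul hW0, ENNReal.ofReal_mul (div_pos ht' ht).le]
        exact rearr _ _ _ _ _
    _ ≤ ENNReal.ofReal ((2:ℝ) ^ (2*(m:ℝ)+θ+aa+1)) *
        ((ENNReal.ofReal W * Kab J y t') * ENNReal.ofReal (t - t')) := by
        refine mul_le_mul_right (mul_le_mul_left (mul_le_mul_right ?_ _) _) _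
        exact Kab_scale' J y ht' ht't
    _ = ENNReal.ofReal ((2:ℝ) ^ (2*(m:ℝ)+θ+aa+1)) *
        ∫⁻ _ in Set.Ioc t' t, ENNReal.ofReal W * Kab J y t' := by
        rw [setLIntegral_const, Real.volume_Ioc]
    _ ≤ _ := mul_le_mul_right (setLIntegral_mono' measurableSet_Ioc hpt) _

/-- Block upper bound. -/
lemma blockUpper (J : X → Y) (y : Y) (x : X)
    (hθ : 0 < θ) (ha : 0 ≤ aa) (hm : 1 ≤ m) (hN : 1 ≤ N) :
    (∫⁻ t in Set.Ioc (ttf θ aa m (N+1)) (ttf θ aa m N),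
      ENNReal.ofReal (t ^ (-(θ/(2*(m:ℝ)+θ)) - 1) *
        |Real.log t| ^ (2*(m:ℝ)*aa/(2*(m:ℝ)+θ))) * Kab J y t)
    ≤ ENNReal.ofReal (((2:ℝ) ^ (2*(m:ℝ)+θ+aa) * (2:ℝ) ^ θ * (2:ℝ) ^ (aa*(θ/(2*(m:ℝ)+θ))) *
        (2*(2*(m:ℝ)+θ+aa)) ^ (2*(m:ℝ)*aa/(2*(m:ℝ)+θ))) * ccf θ aa N) *
      (ENNReal.ofReal ‖y - J x‖ + ENNReal.ofReal (ttf θ aa m N) * ENNReal.ofReal ‖x‖) := by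
  set ga : ℝ := θ/(2*(m:ℝ)+θ)
  set b : ℝ := 2*(m:ℝ)*aa/(2*(m:ℝ)+θ)
  set t : ℝ := ttf θ aa m N with htdef
  set t' : ℝ := ttf θ aa m (N+1) with ht'def
  have ht : 0 < t := ttf_pos hN
  have ht' : 0 < t' := ttf_pos (by omega)
  have ht1 : t < 1 := ttf_lt_one hθ ha hm hN
  set W' : ℝ := t' ^ (-ga - 1) * |Real.log t'| ^ b with hW'def
  have hW'0 : 0 ≤ W' := by positivity
  set Q : ℝ≥0∞ := ENNReal.ofReal ‖y - J x‖ + ENNReal.ofReal t * ENNReal.ofReal ‖x‖ with hQdef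
  have hpt : ∀ s ∈ Set.Ioc t' t,
      ENNReal.ofReal (s ^ (-ga - 1) * |Real.log s| ^ b) * Kab J y s ≤
        ENNReal.ofReal W' * Q := by
    intro s hs
    refine mul_le_mul ?_ ((Kab_mono J y hs.2).trans (Kab_le J y t x)) zero_le zero_le
    exact ENNReal.ofReal_le_ofReal
      (weight_anti (hga_le hθ hm) (hb_nonneg hθ ha hm) ht' hs.1.le (lt_of_le_of_lt hs.2 ht1))
  calc (∫⁻ s in Set.Ioc t' t,
        ENNReal.ofReal (s ^ (-ga - 1) * |Real.log s| ^ b) * Kab J y s)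
      ≤ ∫⁻ _ in Set.Ioc t' t, ENNReal.ofReal W' * Q :=
        setLIntegral_mono' measurableSet_Ioc hpt
    _ = (ENNReal.ofReal W' * Q) * ENNReal.ofReal (t - t') := by
        rw [setLIntegral_const, Real.volume_Ioc]
    _ ≤ (ENNReal.ofReal W' * Q) * ENNReal.ofReal t :=
        mul_le_mul_right (ENNReal.ofReal_le_ofReal (by linarith)) _
    _ = ENNReal.ofReal (W' * t) * Q := by
        rw [ENNReal.ofReal_mul hW'0]
        exact rearr2 _ _ _
    _ ≤ _ := by
        refine mul_le_mul_left (ENNReal.ofReal_le_ofReal ?_) _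
        exact realB hθ ha hm hN

/-- Head estimate. -/
lemma headBound (J : X → Y) (hJ0 : J 0 = 0) (y : Y)
    (hθ : 0 < θ) (ha : 0 ≤ aa) (hm : 1 ≤ m) :
    (∫⁻ t in Set.Ioo (ttf θ aa m 1) 1,
      ENNReal.ofReal (t ^ (-(θ/(2*(m:ℝ)+θ)) - 1) *
        |Real.log t| ^ (2*(m:ℝ)*aa/(2*(m:ℝ)+θ))) * Kab J y t)
    ≤ ENNReal.ofReal ((ttf θ aa m 1) ^ (-(θ/(2*(m:ℝ)+θ)) - 1) *
        |Real.log (ttf θ aa m 1)| ^ (2*(m:ℝ)*aa/(2*(m:ℝ)+θ))) * ENNReal.ofReal ‖y‖ := by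
  set ga : ℝ := θ/(2*(m:ℝ)+θ)
  set b : ℝ := 2*(m:ℝ)*aa/(2*(m:ℝ)+θ)
  set t1 : ℝ := ttf θ aa m 1 with ht1def
  have ht1 : 0 < t1 := ttf_pos le_rfl
  set c : ℝ≥0∞ := ENNReal.ofReal (t1 ^ (-ga - 1) * |Real.log t1| ^ b) * ENNReal.ofReal ‖y‖
    with hcdef
  have hpt : ∀ s ∈ Set.Ioo t1 1,
      ENNReal.ofReal (s ^ (-ga - 1) * |Real.log s| ^ b) * Kab J y s ≤ c := by
    intro s hs
    refine mul_le_mul ?_ (Kab_le_norm J hJ0 y s) zero_le zero_le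
    exact ENNReal.ofReal_le_ofReal
      (weight_anti (hga_le hθ hm) (hb_nonneg hθ ha hm) ht1 hs.1.le hs.2)
  calc (∫⁻ s in Set.Ioo t1 1,
        ENNReal.ofReal (s ^ (-ga - 1) * |Real.log s| ^ b) * Kab J y s)
      ≤ ∫⁻ _ in Set.Ioo t1 1, c := setLIntegral_mono' measurableSet_Ioo hpt
    _ = c * volume (Set.Ioo t1 1) := MeasureTheory.setLIntegral_const (Set.Ioo t1 1) c
    _ ≤ c * 1 := by
        refine mul_le_mul_right ?_ _
        rw [Real.volume_Ioo]
        exact ENNReal.ofReal_le_one.2 (by linarith)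
    _ = c := mul_one c

/-- Covering of `(0,1)`. -/
lemma covering (hθ : 0 < θ) (ha : 0 ≤ aa) (hm : 1 ≤ m) :
    Set.Ioo (0:ℝ) 1 ⊆ Set.Ioo (ttf θ aa m 1) 1 ∪
      ⋃ n : ℕ, Set.Ioc (ttf θ aa m (n+2)) (ttf θ aa m (n+1)) := by
  intro s hs
  obtain ⟨hs0, hs1⟩ := hs
  by_cases hcase : ttf θ aa m 1 < s
  · exact Or.inl ⟨hcase, hs1⟩
  push_neg at hcase
  have hhalf : ∀ N : ℕ, 1 ≤ N → ttf θ aa m N ≤ (1/2:ℝ) ^ N := by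
    intro N hN
    have hN' : (1:ℝ) ≤ (N:ℝ) := by exact_mod_cast hN
    have hm' : (1:ℝ) ≤ (m:ℝ) := by exact_mod_cast hm
    have h1 : ((N:ℝ)) ^ (-aa) ≤ 1 :=
      Real.rpow_le_one_of_one_le_of_nonpos hN' (by linarith)
    have h2 : (2:ℝ) ^ (-(N:ℝ) * (2*(m:ℝ)+θ)) ≤ (2:ℝ) ^ (-(N:ℝ)) := by
      apply Real.rpow_le_rpow_of_exponent_le one_le_two
      nlinarith
    have h3 : (2:ℝ) ^ (-(N:ℝ)) = (1/2:ℝ) ^ N := by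
      rw [Real.rpow_neg two_pos.le, Real.rpow_natCast, one_div, inv_pow]
    calc ttf θ aa m N ≤ (2:ℝ) ^ (-(N:ℝ) * (2*(m:ℝ)+θ)) * 1 := by
          exact mul_le_mul_of_nonneg_left h1 (Real.rpow_pos_of_pos two_pos _).le
      _ = (2:ℝ) ^ (-(N:ℝ) * (2*(m:ℝ)+θ)) := mul_one _
      _ ≤ (1/2:ℝ) ^ N := h3 ▸ h2
  have hex : ∃ k : ℕ, ttf θ aa m (k+1) < s := by
    obtain ⟨j, hj⟩ := exists_pow_lt_of_lt_one hs0 (by norm_num : (1/2:ℝ) < 1)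
    refine ⟨j, lt_of_le_of_lt ?_ hj⟩
    calc ttf θ aa m (j+1) ≤ (1/2:ℝ) ^ (j+1) := hhalf _ (by omega)
      _ ≤ (1/2:ℝ) ^ j := by
          apply pow_le_pow_of_le_one (by norm_num) (by norm_num)
          omega
  set k0 := Nat.find hex with hk0def
  have hk0 : ttf θ aa m (k0+1) < s := Nat.find_spec hex
  have hk0ne : k0 ≠ 0 := by
    intro h
    rw [h] at hk0
    exact absurd hk0 (not_lt.2 hcase)
  refine Or.inr (Set.mem_iUnion.2 ⟨k0 - 1, ?_⟩)
  have hk0eq : k0 - 1 + 1 = k0 := Nat.succ_pred_eq_of_pos (Nat.pos_of_ne_zero hk0ne)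
  constructor
  · have : k0 - 1 + 2 = k0 + 1 := by omega
    rw [this]
    exact hk0
  · rw [hk0eq]
    by_contra hlt
    push_neg at hlt
    have : ¬ ttf θ aa m ((k0-1)+1) < s := Nat.find_min hex (by omega)
    rw [hk0eq] at this
    exact this hlt

/-- Disjointness of the blocks. -/
lemma blocksDisjoint (hθ : 0 < θ) (ha : 0 ≤ aa) :
    Pairwise (Function.onFun Disjoint
      fun n : ℕ => Set.Ioc (ttf θ aa m (n+2)) (ttf θ aa m (n+1))) := by
  have key : ∀ i j : ℕ, i < j →
      Disjoint (Set.Ioc (ttf θ aa m (i+2)) (ttf θ aa m (i+1)))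
        (Set.Ioc (ttf θ aa m (j+2)) (ttf θ aa m (j+1))) := by
    intro i j hij
    rw [Set.Ioc_disjoint_Ioc]
    have h : ttf θ aa m (j+1) ≤ ttf θ aa m (i+2) :=
      ttf_anti ha (by omega) hθ.le (by omega)
    exact le_trans (min_le_right _ _) (le_trans h (le_max_left _ _))
  intro i j hij
  rcases lt_or_gt_of_ne hij with h | h
  · exact key i j h
  · exact (key j i h).symm


-- ### assembly

/-- The `π`-series term equals `c_N (‖y - Jx‖ + t_N ‖x‖)`. -/
lemma term_eq (J : X → Y) (y : Y) (v : X) (hm : 1 ≤ m) (n : ℕ) :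
    ENNReal.ofReal ((2:ℝ) ^ (((n:ℝ) + 1) * θ) * ((n:ℝ) + 1) ^ aa) *
        ENNReal.ofReal ‖y - J v‖
      + ((2:ℝ≥0∞) ^ (2 * (n+1) * m))⁻¹ * ENNReal.ofReal ‖v‖
    = ENNReal.ofReal (ccf θ aa (n+1)) *
        (ENNReal.ofReal ‖y - J v‖ + ENNReal.ofReal (ttf θ aa m (n+1)) * ENNReal.ofReal ‖v‖) := by
  have hc : ENNReal.ofReal ((2:ℝ) ^ (((n:ℝ) + 1) * θ) * ((n:ℝ) + 1) ^ aa)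
      = ENNReal.ofReal (ccf θ aa (n+1)) := by
    congr 1
    rw [ccf]
    push_cast
    ring_nf
  have hc2 : ((2:ℝ≥0∞) ^ (2 * (n+1) * m))⁻¹
      = ENNReal.ofReal (ccf θ aa (n+1)) * ENNReal.ofReal (ttf θ aa m (n+1)) := by
    rw [← ENNReal.ofReal_mul (ccf_pos (θ := θ) (aa := aa) (by omega)).le,
      ccf_mul_ttf (by omega)]
    have hcast : -(2 * ((n+1:ℕ):ℝ) * (m:ℝ)) = -((2*(n+1)*m : ℕ):ℝ) := by push_cast; ring
    rw [hcast, Real.rpow_neg (by positivity), Real.rpow_natCast,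
      ENNReal.ofReal_inv_of_pos (by positivity), ENNReal.ofReal_pow (by norm_num)]
    norm_num
  rw [hc, hc2, mul_add, mul_assoc]

/-- Geometric series helper : `∑ 2^{-(n+1)} = 1`. -/
lemma tsum_half_pow : (∑' n : ℕ, ((2:ℝ≥0∞)⁻¹) ^ (n+1)) = 1 := by
  have h : ∀ n : ℕ, ((2:ℝ≥0∞)⁻¹) ^ (n+1) = 2⁻¹ * (2⁻¹) ^ n := fun n => by
    rw [pow_succ]; ring
  simp_rw [h]
  rw [ENNReal.tsum_mul_left, ENNReal.tsum_geometric, ENNReal.one_sub_inv_two, inv_inv]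
  simp [ENNReal.inv_mul_cancel]

/-- Proposition A : `ρ ≤ C_A |y|`. -/
lemma propA (J : X → Y) (hJ0 : J 0 = 0) (y : Y)
    (hθ : 0 < θ) (ha : 0 ≤ aa) (hm : 1 ≤ m) :
    rhoAb J θ aa m y ≤ ENNReal.ofReal ((2:ℝ) ^ (2*(m:ℝ)+θ+aa+1)) *
      normGB J (θ/(2*(m:ℝ)+θ)) (2*(m:ℝ)*aa/(2*(m:ℝ)+θ)) y := by
  refine ENNReal.le_of_forall_pos_le_add fun ε hε _ => ?_
  set CA : ℝ≥0∞ := ENNReal.ofReal ((2:ℝ) ^ (2*(m:ℝ)+θ+aa+1))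
  set G := normGB J (θ/(2*(m:ℝ)+θ)) (2*(m:ℝ)*aa/(2*(m:ℝ)+θ)) y with hGdef
  -- near-optimal choices
  have hchoice : ∀ n : ℕ, ∃ v : X,
      ENNReal.ofReal ‖y - J v‖ + ENNReal.ofReal (ttf θ aa m (n+1)) * ENNReal.ofReal ‖v‖
        < Kab J y (ttf θ aa m (n+1)) +
          (ε:ℝ≥0∞) * (2⁻¹) ^ (n+1) * (ENNReal.ofReal (ccf θ aa (n+1)))⁻¹ := by
    intro n
    have hKfin : Kab J y (ttf θ aa m (n+1)) ≠ ∞ :=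
      ((Kab_le_norm J hJ0 y _).trans_lt ENNReal.ofReal_lt_top).ne
    have hccf : ENNReal.ofReal (ccf θ aa (n+1)) ≠ ∞ := ENNReal.ofReal_ne_top
    have hδ0 : (ε:ℝ≥0∞) * (2⁻¹) ^ (n+1) * (ENNReal.ofReal (ccf θ aa (n+1)))⁻¹ ≠ 0 := by
      refine mul_ne_zero (mul_ne_zero ?_ ?_) ?_
      · exact ENNReal.coe_ne_zero.2 hε.ne'
      · exact pow_ne_zero _ (ENNReal.inv_ne_zero.2 ENNReal.ofNat_ne_top)
      · exact ENNReal.inv_ne_zero.2 hccf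
    have hlt := ENNReal.lt_add_right hKfin hδ0
    rw [Kab] at hlt
    obtain ⟨v, hv⟩ := iInf_lt_iff.mp hlt
    exact ⟨v, hv⟩
  choose g hg using hchoice
  -- the competitor sequence
  have hrho : rhoAb J θ aa m y ≤ piAb J θ aa m y (fun k => g (k-1)) := iInf_le _ _
  refine hrho.trans ?_
  have hterm : ∀ n : ℕ,
      ENNReal.ofReal ((2:ℝ) ^ (((n:ℝ) + 1) * θ) * ((n:ℝ) + 1) ^ aa) *
          ENNReal.ofReal ‖y - J (g n)‖
        + ((2:ℝ≥0∞) ^ (2 * (n+1) * m))⁻¹ * ENNReal.ofReal ‖g n‖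
      ≤ ENNReal.ofReal (ccf θ aa (n+1)) * Kab J y (ttf θ aa m (n+1))
        + (ε:ℝ≥0∞) * (2⁻¹) ^ (n+1) := by
    intro n
    rw [term_eq J y (g n) hm n]
    have hccf0 : ENNReal.ofReal (ccf θ aa (n+1)) ≠ 0 := by
      simp [ENNReal.ofReal_eq_zero, not_le, ccf_pos (θ := θ) (aa := aa) (Nat.le_add_left 1 n)]
    have hccft : ENNReal.ofReal (ccf θ aa (n+1)) ≠ ∞ := ENNReal.ofReal_ne_top
    calc ENNReal.ofReal (ccf θ aa (n+1)) *
          (ENNReal.ofReal ‖y - J (g n)‖ +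
            ENNReal.ofReal (ttf θ aa m (n+1)) * ENNReal.ofReal ‖g n‖)
        ≤ ENNReal.ofReal (ccf θ aa (n+1)) *
          (Kab J y (ttf θ aa m (n+1)) +
            (ε:ℝ≥0∞) * (2⁻¹) ^ (n+1) * (ENNReal.ofReal (ccf θ aa (n+1)))⁻¹) :=
          mul_le_mul_right (hg n).le _
      _ = ENNReal.ofReal (ccf θ aa (n+1)) * Kab J y (ttf θ aa m (n+1))
          + (ε:ℝ≥0∞) * (2⁻¹) ^ (n+1) *
            ((ENNReal.ofReal (ccf θ aa (n+1)))⁻¹ * ENNReal.ofReal (ccf θ aa (n+1))) := by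
          rw [mul_add]
          ring
      _ = ENNReal.ofReal (ccf θ aa (n+1)) * Kab J y (ttf θ aa m (n+1))
          + (ε:ℝ≥0∞) * (2⁻¹) ^ (n+1) := by
          rw [ENNReal.inv_mul_cancel hccf0 hccft, mul_one]
  calc piAb J θ aa m y (fun k => g (k-1))
      ≤ ∑' n : ℕ, (ENNReal.ofReal (ccf θ aa (n+1)) * Kab J y (ttf θ aa m (n+1))
          + (ε:ℝ≥0∞) * (2⁻¹) ^ (n+1)) := by
        rw [piAb]
        exact ENNReal.tsum_le_tsum fun n => by
          simpa using hterm n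
    _ = (∑' n : ℕ, ENNReal.ofReal (ccf θ aa (n+1)) * Kab J y (ttf θ aa m (n+1)))
        + ∑' n : ℕ, (ε:ℝ≥0∞) * (2⁻¹) ^ (n+1) := ENNReal.tsum_add
    _ ≤ CA * G + ε := by
        refine add_le_add ?_ ?_
        · -- block comparison
          calc (∑' n : ℕ, ENNReal.ofReal (ccf θ aa (n+1)) * Kab J y (ttf θ aa m (n+1)))
              ≤ ∑' n : ℕ, CA *
                ∫⁻ t in Set.Ioc (ttf θ aa m (n+2)) (ttf θ aa m (n+1)),
                  ENNReal.ofReal (t ^ (-(θ/(2*(m:ℝ)+θ)) - 1) *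
                    |Real.log t| ^ (2*(m:ℝ)*aa/(2*(m:ℝ)+θ))) * Kab J y t :=
                ENNReal.tsum_le_tsum fun n =>
                  blockLower J y hθ ha hm (Nat.le_add_left 1 n)
            _ = CA * ∑' n : ℕ,
                ∫⁻ t in Set.Ioc (ttf θ aa m (n+2)) (ttf θ aa m (n+1)),
                  ENNReal.ofReal (t ^ (-(θ/(2*(m:ℝ)+θ)) - 1) *
                    |Real.log t| ^ (2*(m:ℝ)*aa/(2*(m:ℝ)+θ))) * Kab J y t :=
                ENNReal.tsum_mul_left
            _ ≤ CA * G := by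
                refine mul_le_mul_right ?_ _
                rw [hGdef, normGB]
                rw [← lintegral_iUnion (fun n => measurableSet_Ioc) (blocksDisjoint hθ ha)]
                refine lintegral_mono_set ?_
                refine Set.iUnion_subset fun n => ?_
                intro s hs
                have h1 : 0 < ttf θ aa m (n+2) := ttf_pos (by omega)
                have h2 : ttf θ aa m (n+1) < 1 := ttf_lt_one hθ ha hm (by omega)
                exact ⟨h1.trans hs.1, lt_of_le_of_lt hs.2 h2⟩
        · rw [ENNReal.tsum_mul_left, tsum_half_pow, mul_one]


/-- Proposition B core : for any competitor sequence. -/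
lemma propBcore (J : X → Y) (hJ0 : J 0 = 0) (y : Y) (x : ℕ → X)
    (hθ : 0 < θ) (ha : 0 ≤ aa) (hm : 1 ≤ m) :
    normGB J (θ/(2*(m:ℝ)+θ)) (2*(m:ℝ)*aa/(2*(m:ℝ)+θ)) y
      ≤ ENNReal.ofReal ((ttf θ aa m 1) ^ (-(θ/(2*(m:ℝ)+θ)) - 1) *
          |Real.log (ttf θ aa m 1)| ^ (2*(m:ℝ)*aa/(2*(m:ℝ)+θ))
        + (2:ℝ) ^ (2*(m:ℝ)+θ+aa) * (2:ℝ) ^ θ * (2:ℝ) ^ (aa*(θ/(2*(m:ℝ)+θ))) *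
          (2*(2*(m:ℝ)+θ+aa)) ^ (2*(m:ℝ)*aa/(2*(m:ℝ)+θ)) + 1) *
        (ENNReal.ofReal ‖y‖ + piAb J θ aa m y x) := by
  set ga : ℝ := θ/(2*(m:ℝ)+θ) with hgadef
  set b : ℝ := 2*(m:ℝ)*aa/(2*(m:ℝ)+θ) with hbdef
  set W1 : ℝ := (ttf θ aa m 1) ^ (-ga - 1) * |Real.log (ttf θ aa m 1)| ^ b with hW1def
  set CB : ℝ := (2:ℝ) ^ (2*(m:ℝ)+θ+aa) * (2:ℝ) ^ θ * (2:ℝ) ^ (aa*ga) *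
      (2*(2*(m:ℝ)+θ+aa)) ^ b with hCBdef
  have hW10 : 0 ≤ W1 := by
    have h1 : (0:ℝ) < ttf θ aa m 1 := ttf_pos le_rfl
    positivity
  have hCB0 : 0 ≤ CB := by
    have hm' : (1:ℝ) ≤ (m:ℝ) := by exact_mod_cast hm
    have h2 : (0:ℝ) < 2*(2*(m:ℝ)+θ+aa) := by nlinarith
    positivity
  set f : ℝ → ℝ≥0∞ := fun t =>
    ENNReal.ofReal (t ^ (-ga - 1) * |Real.log t| ^ b) * Kab J y t with hfdef
  calc normGB J ga b y
      ≤ ∫⁻ t in (Set.Ioo (ttf θ aa m 1) 1 ∪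
          ⋃ n : ℕ, Set.Ioc (ttf θ aa m (n+2)) (ttf θ aa m (n+1))), f t :=
        lintegral_mono_set (covering hθ ha hm)
    _ ≤ (∫⁻ t in Set.Ioo (ttf θ aa m 1) 1, f t) +
        ∫⁻ t in (⋃ n : ℕ, Set.Ioc (ttf θ aa m (n+2)) (ttf θ aa m (n+1))), f t :=
        lintegral_union_le _ _ _
    _ ≤ (∫⁻ t in Set.Ioo (ttf θ aa m 1) 1, f t) +
        ∑' n : ℕ, ∫⁻ t in Set.Ioc (ttf θ aa m (n+2)) (ttf θ aa m (n+1)), f t :=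
        add_le_add_right (lintegral_iUnion_le _ _) _
    _ ≤ ENNReal.ofReal W1 * ENNReal.ofReal ‖y‖ +
        ∑' n : ℕ, ENNReal.ofReal (CB * ccf θ aa (n+1)) *
          (ENNReal.ofReal ‖y - J (x (n+1))‖ +
            ENNReal.ofReal (ttf θ aa m (n+1)) * ENNReal.ofReal ‖x (n+1)‖) := by
        refine add_le_add (headBound J hJ0 y hθ ha hm) (ENNReal.tsum_le_tsum fun n => ?_)
        exact blockUpper J y (x (n+1)) hθ ha hm (Nat.le_add_left 1 n)
    _ = ENNReal.ofReal W1 * ENNReal.ofReal ‖y‖ + ENNReal.ofReal CB * piAb J θ aa m y x := by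
        congr 1
        rw [piAb]
        rw [← ENNReal.tsum_mul_left]
        congr 1
        funext n
        rw [term_eq J y (x (n+1)) hm n, ENNReal.ofReal_mul hCB0, mul_assoc]
    _ ≤ ENNReal.ofReal (W1 + CB + 1) * ENNReal.ofReal ‖y‖ +
        ENNReal.ofReal (W1 + CB + 1) * piAb J θ aa m y x := by
        refine add_le_add (mul_le_mul_left (ENNReal.ofReal_le_ofReal (by linarith)) _)
          (mul_le_mul_left (ENNReal.ofReal_le_ofReal (by linarith)) _)
    _ = ENNReal.ofReal (W1 + CB + 1) * (ENNReal.ofReal ‖y‖ + piAb J θ aa m y x) := by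
        rw [mul_add]

/-- Proposition B. -/
lemma propB (J : X → Y) (hJ0 : J 0 = 0) (y : Y)
    (hθ : 0 < θ) (ha : 0 ≤ aa) (hm : 1 ≤ m) :
    normGB J (θ/(2*(m:ℝ)+θ)) (2*(m:ℝ)*aa/(2*(m:ℝ)+θ)) y
      ≤ ENNReal.ofReal ((ttf θ aa m 1) ^ (-(θ/(2*(m:ℝ)+θ)) - 1) *
          |Real.log (ttf θ aa m 1)| ^ (2*(m:ℝ)*aa/(2*(m:ℝ)+θ))
        + (2:ℝ) ^ (2*(m:ℝ)+θ+aa) * (2:ℝ) ^ θ * (2:ℝ) ^ (aa*(θ/(2*(m:ℝ)+θ))) *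
          (2*(2*(m:ℝ)+θ+aa)) ^ (2*(m:ℝ)*aa/(2*(m:ℝ)+θ)) + 1) *
        (ENNReal.ofReal ‖y‖ + rhoAb J θ aa m y) := by
  set D : ℝ≥0∞ := ENNReal.ofReal ((ttf θ aa m 1) ^ (-(θ/(2*(m:ℝ)+θ)) - 1) *
          |Real.log (ttf θ aa m 1)| ^ (2*(m:ℝ)*aa/(2*(m:ℝ)+θ))
        + (2:ℝ) ^ (2*(m:ℝ)+θ+aa) * (2:ℝ) ^ θ * (2:ℝ) ^ (aa*(θ/(2*(m:ℝ)+θ))) *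
          (2*(2*(m:ℝ)+θ+aa)) ^ (2*(m:ℝ)*aa/(2*(m:ℝ)+θ)) + 1) with hDdef
  have h1 : normGB J (θ/(2*(m:ℝ)+θ)) (2*(m:ℝ)*aa/(2*(m:ℝ)+θ)) y ≤
      ⨅ x : ℕ → X, D * (ENNReal.ofReal ‖y‖ + piAb J θ aa m y x) :=
    le_iInf fun x => propBcore J hJ0 y x hθ ha hm
  refine h1.trans ?_
  rw [rhoAb, ENNReal.add_iInf]
  rw [ENNReal.mul_iInf_of_ne ?h0 ENNReal.ofReal_ne_top]
  case h0 =>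
    simp only [ne_eq, ENNReal.ofReal_eq_zero, not_le]
    have h1 : (0:ℝ) < ttf θ aa m 1 := ttf_pos le_rfl
    have hm' : (1:ℝ) ≤ (m:ℝ) := by exact_mod_cast hm
    have h2 : (0:ℝ) < 2*(2*(m:ℝ)+θ+aa) := by nlinarith
    positivity



end Stmt14Helpers

/-- Proposition 6.4: for normed spaces `X ⊂ Y` (continuous embedding `J`),
`a ≥ 0`, `m ∈ ℕ*`, `θ > 0`: `S_{θ,m,a}(X,Y) = K_{γ,b}(X,Y)` with `γ = θ/(2m+θ)`,
`b = 2ma/(2m+θ)`, and there is a universal constant `C` with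
`(1/C) ρ^{X,Y}_{θ,m,a}(y) ≤ |y|_{γ,b} ≤ C(‖y‖_Y + ρ^{X,Y}_{θ,m,a}(y))` for all `y`. -/
theorem stmt14 {X Y : Type*} [NormedAddCommGroup X] [NormedAddCommGroup Y]
    [NormedSpace ℝ X] [NormedSpace ℝ Y]
    (J : X →ₗ[ℝ] Y) (hJ : ∃ c : ℝ, ∀ x, ‖J x‖ ≤ c * ‖x‖)
    (aa : ℝ) (ha : 0 ≤ aa) (m : ℕ) (hm : 1 ≤ m) (θ : ℝ) (hθ : 0 < θ) :
    -- S_{θ,m,a}(X,Y) = K_{γ,b}(X,Y)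
    (∀ y : Y, rhoAb J θ aa m y ≠ ∞ ↔
      normGB J (θ / (2 * m + θ)) (2 * m * aa / (2 * m + θ)) y ≠ ∞) ∧
    -- the two-sided norm estimate
    (∃ C : ℝ≥0∞, 0 < C ∧ C ≠ ∞ ∧ ∀ y : Y,
      C⁻¹ * rhoAb J θ aa m y ≤
        normGB J (θ / (2 * m + θ)) (2 * m * aa / (2 * m + θ)) y ∧
      normGB J (θ / (2 * m + θ)) (2 * m * aa / (2 * m + θ)) y ≤
        C * (ENNReal.ofReal ‖y‖ + rhoAb J θ aa m y)) := by
  have hJ0 : (⇑J) 0 = 0 := map_zero J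
  set CAr : ℝ := (2:ℝ) ^ (2*(m:ℝ)+θ+aa+1) with hCArdef
  set Dr : ℝ := (ttf θ aa m 1) ^ (-(θ/(2*(m:ℝ)+θ)) - 1) *
          |Real.log (ttf θ aa m 1)| ^ (2*(m:ℝ)*aa/(2*(m:ℝ)+θ))
        + (2:ℝ) ^ (2*(m:ℝ)+θ+aa) * (2:ℝ) ^ θ * (2:ℝ) ^ (aa*(θ/(2*(m:ℝ)+θ))) *
          (2*(2*(m:ℝ)+θ+aa)) ^ (2*(m:ℝ)*aa/(2*(m:ℝ)+θ)) + 1 with hDrdef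
  have hCAr0 : 0 ≤ CAr := (Real.rpow_pos_of_pos two_pos _).le
  have hDr0 : 0 ≤ Dr := by
    rw [hDrdef]
    have h1 : (0:ℝ) < ttf θ aa m 1 := ttf_pos le_rfl
    have hm' : (1:ℝ) ≤ (m:ℝ) := by exact_mod_cast hm
    have h2 : (0:ℝ) < 2*(2*(m:ℝ)+θ+aa) := by nlinarith
    positivity
  have hA : ∀ y : Y, rhoAb (⇑J) θ aa m y ≤ ENNReal.ofReal CAr *
      normGB (⇑J) (θ/(2*(m:ℝ)+θ)) (2*(m:ℝ)*aa/(2*(m:ℝ)+θ)) y :=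
    fun y => propA (⇑J) hJ0 y hθ ha hm
  have hB : ∀ y : Y, normGB (⇑J) (θ/(2*(m:ℝ)+θ)) (2*(m:ℝ)*aa/(2*(m:ℝ)+θ)) y ≤
      ENNReal.ofReal Dr * (ENNReal.ofReal ‖y‖ + rhoAb (⇑J) θ aa m y) :=
    fun y => propB (⇑J) hJ0 y hθ ha hm
  set C : ℝ≥0∞ := ENNReal.ofReal (CAr + Dr + 1) with hCdef
  have hC0 : 0 < C := ENNReal.ofReal_pos.2 (by linarith)
  have hCA_le : ENNReal.ofReal CAr ≤ C := ENNReal.ofReal_le_ofReal (by linarith)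
  have hD_le : ENNReal.ofReal Dr ≤ C := ENNReal.ofReal_le_ofReal (by linarith)
  constructor
  · intro y
    constructor
    · intro hrho
      refine ne_top_of_le_ne_top ?_ (hB y)
      exact ENNReal.mul_ne_top ENNReal.ofReal_ne_top
        (ENNReal.add_ne_top.2 ⟨ENNReal.ofReal_ne_top, hrho⟩)
    · intro hG
      refine ne_top_of_le_ne_top ?_ (hA y)
      exact ENNReal.mul_ne_top ENNReal.ofReal_ne_top hG
  · refine ⟨C, hC0, ENNReal.ofReal_ne_top, fun y => ⟨?_, ?_⟩⟩
    · have h1 : rhoAb (⇑J) θ aa m y ≤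
          C * normGB (⇑J) (θ/(2*(m:ℝ)+θ)) (2*(m:ℝ)*aa/(2*(m:ℝ)+θ)) y :=
        (hA y).trans (mul_le_mul_left hCA_le _)
      calc C⁻¹ * rhoAb (⇑J) θ aa m y
          ≤ C⁻¹ * (C * normGB (⇑J) (θ/(2*(m:ℝ)+θ)) (2*(m:ℝ)*aa/(2*(m:ℝ)+θ)) y) :=
            mul_le_mul_right h1 _
        _ = normGB (⇑J) (θ/(2*(m:ℝ)+θ)) (2*(m:ℝ)*aa/(2*(m:ℝ)+θ)) y := by
            rw [← mul_assoc, ENNReal.inv_mul_cancel hC0.ne' ENNReal.ofReal_ne_top, one_mul]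
    · exact (hB y).trans (mul_le_mul_left hD_le _)
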